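/- If g is continuous on a right-neighborhood of 0, differentiable at 0, and g(0) = 1, then the Markov-fluid throughput map r(x) = −(P_on/θ)·((α + β − log_e g(x))/(α − log_e g(x)))·log_e g(x) is differentiable at 0 with r'(0) = −g'(0)/θ. -/

import Mathlib

open Real Set

/-- If `g` is continuous on a right-neighborhood of 0, differentiable
at 0 (from the right, with derivative `g'`), and `g 0 = 1`, then the Markov-fluid
throughput map
`r(x) = −(P_on/θ)·((α + β − log g(x))/(α − log g(x)))·log g(x)`
is differentiable at 0 with `r'(0) = −g'(0)/θ`. -/
theorem markov_fluid_throughput_first_derivative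
    (θ α β : ℝ) (hθ : 0 < θ) (hα : 0 < α) (hβ : 0 ≤ β)
    (Pon : ℝ) (hPon : Pon = α / (α + β))
    (g : ℝ → ℝ) (g' : ℝ)
    (ε : ℝ) (hε : 0 < ε) (hgcont : ContinuousOn g (Set.Ico 0 ε))
    (hg0 : g 0 = 1)
    (hgderiv : HasDerivWithinAt g g' (Set.Ici 0) 0)
    (r : ℝ → ℝ)
    (hr : ∀ x, r x = -(Pon / θ) *
      ((α + β - Real.log (g x)) / (α - Real.log (g x))) * Real.log (g x)) :
    HasDerivWithinAt r (-g' / θ) (Set.Ici 0) 0 := by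
  have hα' : α ≠ 0 := ne_of_gt hα
  have hab : α + β ≠ 0 := by positivity
  have hh : HasDerivWithinAt (fun x => Real.log (g x)) g' (Set.Ici 0) 0 := by
    have hlog : HasDerivAt Real.log ((g 0)⁻¹) (g 0) :=
      Real.hasDerivAt_log (by rw [hg0]; norm_num)
    have := hlog.comp_hasDerivWithinAt 0 hgderiv
    rw [hg0, inv_one, one_mul] at this
    exact this
  have hq : HasDerivAt (fun u : ℝ => -(Pon/θ) * ((α+β-u)/(α-u)) * u)
      (-(Pon/θ)*((α+β)/α)) 0 := by
    have h1 : HasDerivAt (fun u : ℝ => α+β-u) (-1) 0 := by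
      simpa using (hasDerivAt_id (0:ℝ)).const_sub (α+β)
    have h2 : HasDerivAt (fun u : ℝ => α-u) (-1) 0 := by
      simpa using (hasDerivAt_id (0:ℝ)).const_sub α
    have hdiv := h1.div h2 (by simpa using hα')
    have hc := (hdiv.const_mul (-(Pon/θ))).mul (hasDerivAt_id 0)
    refine hc.congr_deriv ?_
    simp
  have hq' : HasDerivAt (fun u : ℝ => -(Pon/θ) * ((α+β-u)/(α-u)) * u)
      (-(Pon/θ)*((α+β)/α)) (Real.log (g 0)) := by
    rw [hg0, Real.log_one]; exact hq
  have hcomp := hq'.comp_hasDerivWithinAt 0 hh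
  have heq : r = (fun u : ℝ => -(Pon/θ) * ((α+β-u)/(α-u)) * u) ∘
      (fun x => Real.log (g x)) := by
    funext x; simp [hr, Function.comp]
  rw [heq]
  refine hcomp.congr_deriv ?_
  rw [hPon]
  field_simp
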